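/- Let P(n,2) = Σ_{t≥1} c_t(n) and γ = Σ_{t≥1} q_t where q_1 = 1/2 and q_t = ((t-1)/(2^t-t-1))·q_{t-1}. Then for every ε > 0 there exists N such that for all n ≥ N, P(n,2) > (γ − ε)·2^n. Combined with the upper bound P(n,2) ≤ γ·2^n, this gives P(n,2)/2^n → γ as n → ∞. -/

import Mathlib

open Finset Filter

open scoped Classical

/-- `primeWeight t n` : sum over partitions of `n` into `t` distinct positive parts
`p 0 > p 1 > ⋯ > p (t-1) ≥ 1` of `(1/(t(t+1))) ∏_{i=1}^{t} ((i+1)/i)^{p_i}`. -/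
noncomputable def primeWeight (t n : ℕ) : ℝ :=
  ∑ p ∈ (Fintype.piFinset (fun _ : Fin t => Finset.range (n + 1))).filter
      (fun p => (∀ i j : Fin t, i < j → p j < p i) ∧ (∀ i, 1 ≤ p i) ∧
        ∑ i, p i = n),
    (1 / ((t : ℝ) * ((t : ℝ) + 1))) *
      ∏ i : Fin t, ((((i : ℕ) : ℝ) + 2) / (((i : ℕ) : ℝ) + 1)) ^ p i

/-- `qseq 1 = 1/2` and `qseq t = ((t-1)/(2^t - t - 1)) * qseq (t-1)` for `t ≥ 2`. -/
noncomputable def qseq : ℕ → ℝ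
  | 0 => 0
  | 1 => 1 / 2
  | t + 2 => (((t : ℝ) + 1) / (2 ^ (t + 2) - ((t : ℝ) + 2) - 1)) * qseq (t + 1)

section FinLemmas

lemma Ici_last (m : ℕ) : Finset.Ici (Fin.last m) = {Fin.last m} := by
  ext k; simp [Fin.last_le_iff, eq_comm]

lemma Ici_castSucc {m : ℕ} (i : Fin m) :
    Finset.Ici i.castSucc = insert i.castSucc (Finset.Ici i.succ) := by
  ext k
  simp only [Finset.mem_Ici, Finset.mem_insert]
  constructor
  · intro h
    rcases eq_or_lt_of_le h with h' | h'
    · exact Or.inl h'.symm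
    · exact Or.inr (Fin.castSucc_lt_iff_succ_le.mp h')
  · rintro (rfl | h)
    · exact le_refl _
    · exact le_of_lt (Fin.castSucc_lt_iff_succ_le.mpr h)

lemma castSucc_not_mem_Ici {m : ℕ} (i : Fin m) : i.castSucc ∉ Finset.Ici i.succ := by
  simp [Fin.castSucc_lt_iff_succ_le.symm]

lemma Iic_zero (m : ℕ) : Finset.Iic (0 : Fin (m+1)) = {0} := by
  ext k; simp [Fin.le_zero_iff]

lemma Iic_succ {m : ℕ} (i : Fin m) :
    Finset.Iic i.succ = insert i.succ (Finset.Iic i.castSucc) := by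
  ext k
  simp only [Finset.mem_Iic, Finset.mem_insert]
  constructor
  · intro h
    rcases eq_or_lt_of_le h with h' | h'
    · exact Or.inl h'
    · exact Or.inr (Fin.le_castSucc_iff.mpr h')
  · rintro (rfl | h)
    · exact le_refl _
    · exact le_of_lt (Fin.le_castSucc_iff.mp h)

lemma succ_not_mem_Iic {m : ℕ} (i : Fin m) : i.succ ∉ Finset.Iic i.castSucc := by
  simp [Fin.le_castSucc_iff]

lemma card_Iic_fin {t : ℕ} (j : Fin t) : (Finset.Iic j).card = (j : ℕ) + 1 := by
  induction t with
  | zero => exact j.elim0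
  | succ m ih =>
      induction j using Fin.induction with
      | zero => simp [Iic_zero]
      | succ i h =>
          rw [Iic_succ, Finset.card_insert_of_notMem (succ_not_mem_Iic i), h]
          simp

lemma sum_Ici_swap {t : ℕ} {M : Type*} [AddCommMonoid M] (f : Fin t → Fin t → M) :
    ∑ i : Fin t, ∑ j ∈ Finset.Ici i, f i j = ∑ j : Fin t, ∑ i ∈ Finset.Iic j, f i j := by
  have h1 : ∀ i : Fin t, Finset.Ici i = Finset.univ.filter (fun j => i ≤ j) := by
    intro i; ext k; simp
  have h2 : ∀ j : Fin t, Finset.Iic j = Finset.univ.filter (fun i => i ≤ j) := by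
    intro j; ext k; simp
  simp_rw [h1, h2, Finset.sum_filter]
  exact Finset.sum_comm

lemma prod_Ici_swap {t : ℕ} {M : Type*} [CommMonoid M] (f : Fin t → Fin t → M) :
    ∏ i : Fin t, ∏ j ∈ Finset.Ici i, f i j = ∏ j : Fin t, ∏ i ∈ Finset.Iic j, f i j := by
  have h1 : ∀ i : Fin t, Finset.Ici i = Finset.univ.filter (fun j => i ≤ j) := by
    intro i; ext k; simp
  have h2 : ∀ j : Fin t, Finset.Iic j = Finset.univ.filter (fun i => i ≤ j) := by
    intro j; ext k; simp
  simp_rw [h1, h2, Finset.prod_filter]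
  exact Finset.prod_comm

lemma prod_Iic_ratio {t : ℕ} (j : Fin t) :
    ∏ i ∈ Finset.Iic j, ((((i : ℕ) : ℝ) + 2) / (((i : ℕ) : ℝ) + 1)) = ((j : ℕ) : ℝ) + 2 := by
  induction t with
  | zero => exact j.elim0
  | succ m ih =>
      induction j using Fin.induction with
      | zero => norm_num [Iic_zero]
      | succ i h =>
          rw [Iic_succ, Finset.prod_insert (succ_not_mem_Iic i), h]
          have hpos : ((i : ℕ) : ℝ) + 1 + 1 ≠ 0 := by positivity
          push_cast [Fin.val_succ, Fin.coe_castSucc]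
          rw [show ((i:ℕ):ℝ) + 2 = ((i:ℕ):ℝ) + 1 + 1 by ring, div_mul_cancel₀ _ hpos]

end FinLemmas

section Bijection

noncomputable def toP {t : ℕ} (d : Fin t → ℕ) : Fin t → ℕ := fun i => ∑ j ∈ Finset.Ici i, d j

noncomputable def toD {t : ℕ} (p : Fin t → ℕ) : Fin t → ℕ :=
  fun j => p j - (if h : (j : ℕ) + 1 < t then p ⟨(j : ℕ) + 1, h⟩ else 0)

lemma toP_last {m : ℕ} (d : Fin (m+1) → ℕ) : toP d (Fin.last m) = d (Fin.last m) := by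
  simp [toP, Ici_last]

lemma toP_castSucc {m : ℕ} (d : Fin (m+1) → ℕ) (i : Fin m) :
    toP d i.castSucc = d i.castSucc + toP d i.succ := by
  simp [toP, Ici_castSucc, Finset.sum_insert (castSucc_not_mem_Ici i)]

lemma toD_last {m : ℕ} (p : Fin (m+1) → ℕ) : toD p (Fin.last m) = p (Fin.last m) := by
  have : ¬ ((Fin.last m : ℕ) + 1 < m + 1) := by simp [Fin.last]
  simp [toD, this]

lemma toD_castSucc {m : ℕ} (p : Fin (m+1) → ℕ) (i : Fin m) :
    toD p i.castSucc = p i.castSucc - p i.succ := by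
  have h : (i.castSucc : ℕ) + 1 < m + 1 := by simp [Fin.is_lt]
  simp only [toD, dif_pos h]
  have : (⟨(i.castSucc : ℕ) + 1, h⟩ : Fin (m+1)) = i.succ := by
    apply Fin.ext; simp
  rw [this]

lemma toP_toD {m : ℕ} (p : Fin (m+1) → ℕ) (hp : ∀ i : Fin m, p i.succ ≤ p i.castSucc) :
    toP (toD p) = p := by
  funext i
  induction i using Fin.reverseInduction with
  | last => rw [toP_last, toD_last]
  | cast i ih => rw [toP_castSucc, ih, toD_castSucc, Nat.sub_add_cancel (hp i)]

lemma toD_toP {m : ℕ} (d : Fin (m+1) → ℕ) : toD (toP d) = d := by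
  funext j
  induction j using Fin.lastCases with
  | last => rw [toD_last, toP_last]
  | cast j => rw [toD_castSucc, toP_castSucc, Nat.add_sub_cancel]

lemma sum_toP {t : ℕ} (d : Fin t → ℕ) :
    ∑ i : Fin t, toP d i = ∑ j : Fin t, ((j : ℕ) + 1) * d j := by
  unfold toP
  rw [sum_Ici_swap (fun _ j => d j)]
  refine Finset.sum_congr rfl fun j _ => ?_
  rw [Finset.sum_const, smul_eq_mul, card_Iic_fin]

lemma prod_toP {t : ℕ} (d : Fin t → ℕ) :
    ∏ i : Fin t, ((((i : ℕ) : ℝ) + 2) / (((i : ℕ) : ℝ) + 1)) ^ (toP d i)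
      = ∏ j : Fin t, (((j : ℕ) : ℝ) + 2) ^ (d j) := by
  unfold toP
  calc ∏ i : Fin t, ((((i : ℕ) : ℝ) + 2) / (((i : ℕ) : ℝ) + 1)) ^ (∑ j ∈ Finset.Ici i, d j)
      = ∏ i : Fin t, ∏ j ∈ Finset.Ici i, ((((i : ℕ) : ℝ) + 2) / (((i : ℕ) : ℝ) + 1)) ^ (d j) := by
        refine Finset.prod_congr rfl fun i _ => ?_
        rw [← Finset.prod_pow_eq_pow_sum]
    _ = ∏ j : Fin t, ∏ i ∈ Finset.Iic j, ((((i : ℕ) : ℝ) + 2) / (((i : ℕ) : ℝ) + 1)) ^ (d j) := by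
        exact prod_Ici_swap _
    _ = ∏ j : Fin t, (((j : ℕ) : ℝ) + 2) ^ (d j) := by
        refine Finset.prod_congr rfl fun j _ => ?_
        rw [Finset.prod_pow, prod_Iic_ratio]

end Bijection

noncomputable def Dset (t n : ℕ) : Finset (Fin t → ℕ) :=
  (Fintype.piFinset (fun _ : Fin t => Finset.range (n + 1))).filter
    (fun d => (∀ j, 1 ≤ d j) ∧ ∑ j : Fin t, ((j : ℕ) + 1) * d j = n)

lemma primeWeight_eq_Dsum (t n : ℕ) :
    primeWeight t n
      = (1 / ((t : ℝ) * ((t : ℝ) + 1))) *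
          ∑ d ∈ Dset t n, ∏ j : Fin t, (((j : ℕ) : ℝ) + 2) ^ d j := by
  unfold primeWeight
  rw [← Finset.mul_sum]
  congr 1
  cases t with
  | zero =>
      refine Finset.sum_congr ?_ (fun x _ => by simp)
      unfold Dset
      apply Finset.filter_congr
      intro x _
      simp
  | succ m =>
      apply Finset.sum_bij' (i := fun p _ => toD p) (j := fun d _ => toP d)
      · -- hi : toD p ∈ Dset
        intro p hp
        rw [Finset.mem_filter] at hp
        obtain ⟨hpi, hstr, hone, hsum⟩ := hp
        rw [Fintype.mem_piFinset] at hpi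
        have hadj : ∀ i : Fin m, p i.succ ≤ p i.castSucc :=
          fun i => le_of_lt (hstr _ _ (Fin.castSucc_lt_succ (i := i)))
        rw [Dset, Finset.mem_filter, Fintype.mem_piFinset]
        refine ⟨fun j => ?_, fun j => ?_, ?_⟩
        · rw [Finset.mem_range]
          calc toD p j ≤ p j := Nat.sub_le _ _
            _ < n + 1 := Finset.mem_range.mp (hpi j)
        · induction j using Fin.lastCases with
          | last => rw [toD_last]; exact hone _
          | cast j =>
              rw [toD_castSucc]
              have := hstr _ _ (Fin.castSucc_lt_succ (i := j))
              omega
        · rw [← sum_toP (toD p)]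
          rw [toP_toD p hadj]
          exact hsum
      · -- hj : toP d ∈ S
        intro d hd
        rw [Dset, Finset.mem_filter, Fintype.mem_piFinset] at hd
        obtain ⟨hdi, hone, hsum⟩ := hd
        rw [Finset.mem_filter, Fintype.mem_piFinset]
        have hanti : StrictAnti (toP d) := by
          rw [Fin.strictAnti_iff_succ_lt]
          intro i
          rw [toP_castSucc]
          have := hone i.castSucc
          omega
        refine ⟨fun i => ?_, fun i j hij => hanti hij, fun i => ?_, ?_⟩
        · rw [Finset.mem_range, Nat.lt_succ_iff, ← hsum]
          calc toP d i = ∑ j ∈ Finset.Ici i, d j := rfl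
            _ ≤ ∑ j : Fin (m+1), d j :=
                Finset.sum_le_sum_of_subset (Finset.subset_univ _)
            _ ≤ ∑ j : Fin (m+1), ((j : ℕ) + 1) * d j :=
                Finset.sum_le_sum (fun j _ => Nat.le_mul_of_pos_left _ (by omega))
        · calc 1 ≤ d i := hone i
            _ ≤ ∑ j ∈ Finset.Ici i, d j :=
                Finset.single_le_sum (fun j _ => Nat.zero_le _) (Finset.mem_Ici.mpr le_rfl)
        · rw [sum_toP]; exact hsum
      · -- left inverse
        intro p hp
        rw [Finset.mem_filter] at hp
        exact toP_toD p (fun i => le_of_lt (hp.2.1 _ _ (Fin.castSucc_lt_succ (i := i))))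
      · -- right inverse
        intro d _
        exact toD_toP d
      · -- values
        intro p hp
        rw [Finset.mem_filter] at hp
        have hadj : ∀ i : Fin m, p i.succ ≤ p i.castSucc :=
          fun i => le_of_lt (hp.2.1 _ _ (Fin.castSucc_lt_succ (i := i)))
        rw [← prod_toP (toD p), toP_toD p hadj]

noncomputable def cg (j : ℕ) : ℝ := ((j : ℝ) + 2) / 2 ^ (j + 1)

lemma cg_pos (j : ℕ) : 0 < cg j := by unfold cg; positivity

lemma cg_zero : cg 0 = 1 := by norm_num [cg]

lemma geom_Icc_le (x : ℝ) (h0 : 0 ≤ x) (h1 : x < 1) (M : ℕ) :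
    ∑ k ∈ Finset.Icc 1 M, x ^ k ≤ x / (1 - x) := by
  have hx : (0:ℝ) < 1 - x := by linarith
  have hs := hasSum_geometric_of_lt_one h0 h1
  have hpart : ∑ k ∈ Finset.range (M + 1), x ^ k ≤ (1 - x)⁻¹ := by
    rw [← hs.tsum_eq]
    exact Summable.sum_le_tsum _ (fun i _ => by positivity) hs.summable
  have hIcc : Finset.Icc 1 M = Finset.Ico 1 (M + 1) := by ext k; simp [Nat.lt_succ_iff]
  rw [hIcc, Finset.sum_Ico_eq_sub _ (by omega : 1 ≤ M + 1)]
  simp only [Finset.range_one, Finset.sum_singleton, pow_zero]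
  have : x / (1 - x) = (1 - x)⁻¹ - 1 := by field_simp; ring
  rw [this]
  linarith

lemma geom_Icc_tendsto (x : ℝ) (h0 : 0 ≤ x) (h1 : x < 1) :
    Tendsto (fun M => ∑ k ∈ Finset.Icc 1 M, x ^ k) atTop (nhds (x / (1 - x))) := by
  have hx : (1:ℝ) - x ≠ 0 := by intro h; linarith
  have hs := (hasSum_geometric_of_lt_one h0 h1).tendsto_sum_nat
  have key : ∀ M : ℕ, ∑ k ∈ Finset.Icc 1 M, x ^ k = (∑ k ∈ Finset.range (M + 1), x ^ k) - 1 := by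
    intro M
    have hIcc : Finset.Icc 1 M = Finset.Ico 1 (M + 1) := by ext k; simp [Nat.lt_succ_iff]
    rw [hIcc, Finset.sum_Ico_eq_sub _ (by omega : 1 ≤ M + 1)]
    simp
  simp_rw [key]
  have h2 : Tendsto (fun M : ℕ => ∑ k ∈ Finset.range (M + 1), x ^ k) atTop (nhds (1 - x)⁻¹) :=
    hs.comp (tendsto_add_atTop_nat 1)
  have := h2.sub_const 1
  convert this using 2
  field_simp
  ring

lemma two_pow_big (j : ℕ) (hj : 1 ≤ j) : j + 3 ≤ 2 ^ (j + 1) := by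
  induction j with
  | zero => omega
  | succ i ih =>
      rcases Nat.eq_or_lt_of_le hj with h | h
      · simp [← h]
      · have h1 : 1 ≤ i := by omega
        have := ih h1
        have h2 : 2 ^ (i + 2) = 2 * 2 ^ (i + 1) := by ring
        omega

lemma two_pow_bigR (j : ℕ) (hj : 1 ≤ j) : ((j : ℝ)) + 3 ≤ 2 ^ (j + 1) := by
  have := two_pow_big j hj
  calc ((j : ℝ)) + 3 = ((j + 3 : ℕ) : ℝ) := by push_cast; ring
    _ ≤ ((2 ^ (j + 1) : ℕ) : ℝ) := by exact_mod_cast this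
    _ = 2 ^ (j + 1) := by push_cast; ring

lemma cg_lt_one (j : ℕ) (hj : 1 ≤ j) : cg j < 1 := by
  unfold cg
  rw [div_lt_one (by positivity)]
  have := two_pow_bigR j hj
  linarith

lemma prod_erase_eq_Ico (m : ℕ) (f : ℕ → ℝ) :
    ∏ j ∈ (Finset.univ : Finset (Fin (m+1))).erase 0, f (j : ℕ)
      = ∏ j ∈ Finset.Ico 1 (m+1), f j := by
  apply Finset.prod_bij (i := fun (j : Fin (m+1)) _ => (j : ℕ))
  · intro a ha
    rw [Finset.mem_erase] at ha
    rw [Finset.mem_Ico]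
    refine ⟨?_, a.isLt⟩
    have h0 : (a : ℕ) ≠ 0 := fun h => ha.1 (Fin.ext (by simp [h]))
    omega
  · intro a _ b _ h
    exact Fin.ext h
  · intro k hk
    rw [Finset.mem_Ico] at hk
    refine ⟨⟨k, hk.2⟩, ?_, rfl⟩
    rw [Finset.mem_erase]
    exact ⟨by apply Fin.ne_of_val_ne; simp; omega, Finset.mem_univ _⟩
  · intro a _; rfl

lemma qseq_closed (m : ℕ) :
    qseq (m+1) = (1 / (((m:ℝ)+1) * ((m:ℝ)+2))) *
      ∏ j ∈ Finset.Ico 1 (m+1), (cg j / (1 - cg j)) := by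
  induction m with
  | zero => norm_num [qseq]
  | succ k ih =>
      have hd : (0:ℝ) < 2 ^ (k+2) - (((k:ℝ)+1)+2) := by
        have := two_pow_bigR (k+1) (by omega)
        push_cast at this ⊢
        rw [show k+1+1 = k+2 from rfl] at this
        linarith
      have hne : (2:ℝ)^(k+2) - ((k:ℝ)+3) ≠ 0 := by push_cast at hd; linarith
      have hlt : cg (k+1) < 1 := cg_lt_one (k+1) (by omega)
      have h1ne : 1 - cg (k+1) ≠ 0 := by linarith
      have hcg : cg (k+1) / (1 - cg (k+1)) = (((k:ℝ))+3) / (2 ^ (k+2) - ((k:ℝ)+3)) := by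
        rw [div_eq_div_iff h1ne hne]
        unfold cg
        rw [show k+1+1 = k+2 from rfl]
        push_cast
        field_simp
        ring
      rw [show k+1+1 = k+2 from rfl, qseq, ih, Finset.prod_Ico_succ_top (by omega : 1 ≤ k+1), hcg]
      have hk1 : ((k:ℝ)+1) ≠ 0 := by positivity
      have hk2 : ((k:ℝ)+2) ≠ 0 := by positivity
      have hk3 : ((k:ℝ)+3) ≠ 0 := by positivity
      have hd2 : (2:ℝ)^(k+2) - ((k:ℝ)+2) - 1 ≠ 0 := by push_cast at hd; intro h; apply hne; linarith
      push_cast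
      generalize (∏ j ∈ Finset.Ico 1 (k+1), (cg j / (1 - cg j))) = P
      push_cast at hd
      field_simp
      ring

lemma qseq_zero : qseq 0 = 0 := rfl

lemma qseq_pos (m : ℕ) : 0 < qseq (m+1) := by
  rw [qseq_closed]
  apply mul_pos (by positivity)
  apply Finset.prod_pos
  intro j hj
  rw [Finset.mem_Ico] at hj
  have h1 := cg_pos j
  have h2 := cg_lt_one j hj.1
  have : (0:ℝ) < 1 - cg j := by linarith
  positivity

lemma qseq_nonneg (t : ℕ) : 0 ≤ qseq t := by
  cases t with
  | zero => rw [qseq_zero]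
  | succ m => exact le_of_lt (qseq_pos m)

lemma nat38 (t : ℕ) : 3*t + 8 ≤ 2^(t+3) := by
  induction t with
  | zero => norm_num
  | succ i ih =>
      have h2 : 2 ^ (i + 1 + 3) = 2 * 2 ^ (i + 3) := by ring
      omega

lemma qseq_step (t : ℕ) : qseq (t+3) ≤ (1/2) * qseq (t+2) := by
  have heq : qseq (t+3) = (((t:ℝ) + 2) / (2 ^ (t + 3) - ((t:ℝ) + 3) - 1)) * qseq (t + 2) := by
    rw [show t+3 = (t+1)+2 from rfl, qseq]
    push_cast
    ring_nf
  rw [heq]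
  apply mul_le_mul_of_nonneg_right _ (qseq_nonneg (t+2))
  have h38 := nat38 t
  have h38R : 3*(t:ℝ) + 8 ≤ 2 ^ (t+3) := by
    calc 3*(t:ℝ) + 8 = ((3*t + 8 : ℕ) : ℝ) := by push_cast; ring
      _ ≤ ((2^(t+3) : ℕ) : ℝ) := by exact_mod_cast h38
      _ = 2 ^ (t+3) := by push_cast; ring
  have hd : (0:ℝ) < 2 ^ (t + 3) - ((t:ℝ) + 3) - 1 := by linarith
  rw [div_le_div_iff₀ hd (by norm_num)]
  linarith

lemma qseq_geom (t : ℕ) : qseq (t+3) ≤ qseq 3 * (1/2)^t := by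
  induction t with
  | zero => simp
  | succ i ih =>
      calc qseq (i+4) ≤ (1/2) * qseq (i+3) := qseq_step (i+1)
        _ ≤ (1/2) * (qseq 3 * (1/2)^i) := by
            apply mul_le_mul_of_nonneg_left ih (by norm_num)
        _ = qseq 3 * (1/2)^(i+1) := by ring

lemma qseq_summable : Summable qseq := by
  have h : Summable (fun t => qseq (t+3)) := by
    apply Summable.of_nonneg_of_le (fun t => qseq_nonneg _) (fun t => qseq_geom t)
    exact (summable_geometric_of_lt_one (by norm_num) (by norm_num)).mul_left (qseq 3)
  exact (summable_nat_add_iff 3).mp h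

lemma Dset_mem {t n : ℕ} {d : Fin t → ℕ} (hd : d ∈ Dset t n) :
    (∀ j, d j ≤ n) ∧ (∀ j, 1 ≤ d j) ∧ ∑ j : Fin t, ((j : ℕ) + 1) * d j = n := by
  rw [Dset, Finset.mem_filter, Fintype.mem_piFinset] at hd
  exact ⟨fun j => Nat.lt_succ_iff.mp (Finset.mem_range.mp (hd.1 j)), hd.2.1, hd.2.2⟩

lemma pw_Vsum (t n : ℕ) :
    primeWeight t n = 2 ^ n * ((1 / ((t : ℝ) * ((t : ℝ) + 1))) *
      ∑ d ∈ Dset t n, ∏ j : Fin t, cg (j : ℕ) ^ d j) := by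
  rw [primeWeight_eq_Dsum, mul_left_comm]
  congr 1
  rw [Finset.mul_sum]
  refine Finset.sum_congr rfl fun d hd => ?_
  obtain ⟨-, -, hsum⟩ := Dset_mem hd
  have h2 : ∏ j : Fin t, ((2:ℝ) ^ ((j : ℕ) + 1)) ^ (d j) = 2 ^ n := by
    have : ∀ j : Fin t, ((2:ℝ) ^ ((j : ℕ) + 1)) ^ (d j) = 2 ^ (((j : ℕ) + 1) * d j) := by
      intro j; rw [← pow_mul]
    rw [Finset.prod_congr rfl (fun j _ => this j), Finset.prod_pow_eq_pow_sum, hsum]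
  calc ∏ j : Fin t, (((j : ℕ) : ℝ) + 2) ^ d j
      = ∏ j : Fin t, (cg (j : ℕ) ^ d j * ((2:ℝ) ^ ((j : ℕ) + 1)) ^ (d j)) := by
        refine Finset.prod_congr rfl fun j _ => ?_
        rw [← mul_pow]
        congr 1
        rw [cg, div_mul_cancel₀]
        positivity
    _ = (∏ j : Fin t, cg (j : ℕ) ^ d j) * ∏ j : Fin t, ((2:ℝ) ^ ((j : ℕ) + 1)) ^ (d j) := by
        rw [Finset.prod_mul_distrib]
    _ = 2 ^ n * ∏ j : Fin t, cg (j : ℕ) ^ d j := by rw [h2, mul_comm]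

lemma Vsum_le_prod (m n : ℕ) :
    ∑ d ∈ Dset (m+1) n, ∏ j : Fin (m+1), cg (j : ℕ) ^ d j
      ≤ ∏ j ∈ (Finset.univ : Finset (Fin (m+1))).erase 0, (cg (j : ℕ) / (1 - cg (j : ℕ))) := by
  classical
  set s : Fin (m+1) → Finset ℕ := fun j => if j = 0 then {1} else Finset.Icc 1 n with hs
  have hVι : ∀ d ∈ Dset (m+1) n,
      ∏ j : Fin (m+1), cg (j : ℕ) ^ (Function.update d 0 1 j) = ∏ j : Fin (m+1), cg (j : ℕ) ^ d j := by
    intro d hd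
    refine Finset.prod_congr rfl fun j _ => ?_
    by_cases hj : j = 0
    · subst hj; simp [cg_zero]
    · rw [Function.update_of_ne hj]
  have hinj : ∀ d ∈ Dset (m+1) n, ∀ d' ∈ Dset (m+1) n,
      Function.update d 0 1 = Function.update d' 0 1 → d = d' := by
    intro d hd d' hd' h
    obtain ⟨-, -, hsum⟩ := Dset_mem hd
    obtain ⟨-, -, hsum'⟩ := Dset_mem hd'
    have htail : ∀ j : Fin (m+1), j ≠ 0 → d j = d' j := by
      intro j hj
      have := congrFun h j
      rwa [Function.update_of_ne hj, Function.update_of_ne hj] at this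
    funext j
    by_cases hj : j = 0
    · subst hj
      have e1 : ∑ j : Fin (m+1), ((j : ℕ) + 1) * d j
          = ((0:Fin (m+1)) : ℕ) * d 0 + d 0 + ∑ j ∈ (Finset.univ : Finset (Fin (m+1))).erase 0, ((j : ℕ) + 1) * d j := by
        rw [← Finset.add_sum_erase _ _ (Finset.mem_univ (0 : Fin (m+1)))]
        simp
      have e2 : ∑ j : Fin (m+1), ((j : ℕ) + 1) * d' j
          = ((0:Fin (m+1)) : ℕ) * d' 0 + d' 0 + ∑ j ∈ (Finset.univ : Finset (Fin (m+1))).erase 0, ((j : ℕ) + 1) * d' j := by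
        rw [← Finset.add_sum_erase _ _ (Finset.mem_univ (0 : Fin (m+1)))]
        simp
      have e3 : ∑ j ∈ (Finset.univ : Finset (Fin (m+1))).erase 0, ((j : ℕ) + 1) * d j
          = ∑ j ∈ (Finset.univ : Finset (Fin (m+1))).erase 0, ((j : ℕ) + 1) * d' j := by
        refine Finset.sum_congr rfl fun j hj => ?_
        rw [htail j (Finset.mem_erase.mp hj).1]
      rw [e1, e3] at hsum
      rw [e2] at hsum'
      simp only [Fin.val_zero, Nat.zero_mul, Nat.zero_add] at hsum hsum'
      omega
    · exact htail j hj
  have himg : ∀ d ∈ Dset (m+1) n, Function.update d 0 1 ∈ Fintype.piFinset s := by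
    intro d hd
    obtain ⟨hle, hone, -⟩ := Dset_mem hd
    rw [Fintype.mem_piFinset]
    intro j
    by_cases hj : j = 0
    · subst hj; simp [hs]
    · rw [Function.update_of_ne hj]
      simp only [hs, if_neg hj, Finset.mem_Icc]
      exact ⟨hone j, hle j⟩
  have hV0 : ∀ e : Fin (m+1) → ℕ, 0 ≤ ∏ j : Fin (m+1), cg (j : ℕ) ^ e j := by
    intro e
    apply Finset.prod_nonneg
    intro j _
    exact pow_nonneg (le_of_lt (cg_pos _)) _
  calc ∑ d ∈ Dset (m+1) n, ∏ j : Fin (m+1), cg (j : ℕ) ^ d j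
      = ∑ d ∈ Dset (m+1) n, ∏ j : Fin (m+1), cg (j : ℕ) ^ (Function.update d 0 1 j) := by
        exact (Finset.sum_congr rfl hVι).symm
    _ = ∑ e ∈ (Dset (m+1) n).image (fun d => Function.update d 0 1),
          ∏ j : Fin (m+1), cg (j : ℕ) ^ e j := by
        rw [Finset.sum_image hinj]
    _ ≤ ∑ e ∈ Fintype.piFinset s, ∏ j : Fin (m+1), cg (j : ℕ) ^ e j := by
        apply Finset.sum_le_sum_of_subset_of_nonneg
        · intro e he
          obtain ⟨d, hd, rfl⟩ := Finset.mem_image.mp he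
          exact himg d hd
        · intro e _ _
          exact hV0 e
    _ = ∏ j : Fin (m+1), ∑ k ∈ s j, cg (j : ℕ) ^ k := (Finset.prod_univ_sum s _).symm
    _ = (∑ k ∈ s 0, cg ((0 : Fin (m+1)) : ℕ) ^ k) *
          ∏ j ∈ (Finset.univ : Finset (Fin (m+1))).erase 0, ∑ k ∈ s j, cg (j : ℕ) ^ k := by
        exact (Finset.mul_prod_erase Finset.univ
          (fun j : Fin (m+1) => ∑ k ∈ s j, cg (j : ℕ) ^ k) (Finset.mem_univ 0)).symm
    _ ≤ ∏ j ∈ (Finset.univ : Finset (Fin (m+1))).erase 0, (cg (j : ℕ) / (1 - cg (j : ℕ))) := by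
        have h0 : (∑ k ∈ s 0, cg ((0 : Fin (m+1)) : ℕ) ^ k) = 1 := by simp [hs, cg_zero]
        rw [h0, one_mul]
        apply Finset.prod_le_prod
        · intro j _
          apply Finset.sum_nonneg
          intro k _
          exact pow_nonneg (le_of_lt (cg_pos _)) _
        · intro j hj
          have hj0 : j ≠ 0 := (Finset.mem_erase.mp hj).1
          have hjv : 1 ≤ (j : ℕ) := by
            have : (j : ℕ) ≠ 0 := fun h => hj0 (Fin.ext (by simp [h]))
            omega
          rw [hs]
          simp only [if_neg hj0]
          exact geom_Icc_le _ (le_of_lt (cg_pos _)) (cg_lt_one _ hjv) n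

lemma primeWeight_le (t n : ℕ) : primeWeight t n ≤ qseq t * 2 ^ n := by
  cases t with
  | zero =>
      rw [primeWeight_eq_Dsum, qseq_zero]
      norm_num
  | succ m =>
      rw [pw_Vsum]
      have hC : (0:ℝ) < 1 / (((m+1 : ℕ) : ℝ) * (((m+1 : ℕ) : ℝ) + 1)) := by positivity
      have key : (1 / (((m+1 : ℕ) : ℝ) * (((m+1 : ℕ) : ℝ) + 1))) *
          (∑ d ∈ Dset (m+1) n, ∏ j : Fin (m+1), cg (j : ℕ) ^ d j) ≤ qseq (m+1) := by
        rw [qseq_closed, ← prod_erase_eq_Ico m (fun j => cg j / (1 - cg j))]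
        have := Vsum_le_prod m n
        have hcoef : (1 / (((m+1 : ℕ) : ℝ) * (((m+1 : ℕ) : ℝ) + 1)))
            = 1 / (((m:ℝ)+1) * ((m:ℝ)+2)) := by push_cast; ring_nf
        rw [hcoef]
        apply mul_le_mul_of_nonneg_left this (by positivity)
      calc (2:ℝ) ^ n * ((1 / (((m+1 : ℕ) : ℝ) * (((m+1 : ℕ) : ℝ) + 1))) *
          ∑ d ∈ Dset (m+1) n, ∏ j : Fin (m+1), cg (j : ℕ) ^ d j)
          ≤ 2 ^ n * qseq (m+1) := by
            apply mul_le_mul_of_nonneg_left key (by positivity)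
        _ = qseq (m+1) * 2 ^ n := by ring

lemma primeWeight_nonneg (t n : ℕ) : 0 ≤ primeWeight t n := by
  rw [pw_Vsum]
  apply mul_nonneg (by positivity)
  apply mul_nonneg
  · apply div_nonneg (by norm_num)
    positivity
  · apply Finset.sum_nonneg
    intro d _
    apply Finset.prod_nonneg
    intro j _
    exact pow_nonneg (le_of_lt (cg_pos _)) _

lemma primeWeight_eq_zero_of_gt {t n : ℕ} (h : n < t) : primeWeight t n = 0 := by
  unfold primeWeight
  rw [Finset.sum_eq_zero]
  intro p hp
  rw [Finset.mem_filter] at hp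
  obtain ⟨-, -, hone, hsum⟩ := hp
  exfalso
  have : (t : ℕ) ≤ ∑ i : Fin t, p i := by
    calc t = ∑ _i : Fin t, 1 := by simp
      _ ≤ ∑ i : Fin t, p i := Finset.sum_le_sum (fun i _ => hone i)
  omega

lemma primeWeight_t0 (n : ℕ) : primeWeight 0 n = 0 :=
  le_antisymm (by simpa [qseq_zero] using primeWeight_le 0 n) (primeWeight_nonneg 0 n)

lemma pw_mono_step (t n : ℕ) : 2 * primeWeight t n ≤ primeWeight t (n + 1) := by
  cases t with
  | zero => rw [primeWeight_t0, primeWeight_t0]; norm_num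
  | succ m =>
      rw [primeWeight_eq_Dsum, primeWeight_eq_Dsum]
      rw [mul_left_comm]
      apply mul_le_mul_of_nonneg_left _ (by positivity)
      rw [Finset.mul_sum]
      set W : (Fin (m+1) → ℕ) → ℝ := fun d => ∏ j : Fin (m+1), (((j : ℕ) : ℝ) + 2) ^ d j with hW
      set φ : (Fin (m+1) → ℕ) → (Fin (m+1) → ℕ) := fun d => Function.update d 0 (d 0 + 1) with hφ
      have hWφ : ∀ d : Fin (m+1) → ℕ, W (φ d) = 2 * W d := by
        intro d
        rw [hW]
        simp only
        rw [← Finset.mul_prod_erase Finset.univ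
            (fun j : Fin (m+1) => (((j : ℕ) : ℝ) + 2) ^ (φ d) j) (Finset.mem_univ 0),
          ← Finset.mul_prod_erase Finset.univ
            (fun j : Fin (m+1) => (((j : ℕ) : ℝ) + 2) ^ d j) (Finset.mem_univ 0)]
        have h1 : ∏ j ∈ (Finset.univ : Finset (Fin (m+1))).erase 0, (((j : ℕ) : ℝ) + 2) ^ (φ d) j
            = ∏ j ∈ (Finset.univ : Finset (Fin (m+1))).erase 0, (((j : ℕ) : ℝ) + 2) ^ d j := by
          refine Finset.prod_congr rfl fun j hj => ?_
          rw [hφ]; simp only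
          rw [Function.update_of_ne (Finset.mem_erase.mp hj).1]
        rw [h1]
        have h2 : (φ d) 0 = d 0 + 1 := by rw [hφ]; simp
        rw [h2]
        have : ((((0 : Fin (m+1)) : ℕ) : ℝ) + 2) = 2 := by simp
        rw [this, pow_succ]
        ring
      have hφmem : ∀ d ∈ Dset (m+1) n, φ d ∈ Dset (m+1) (n+1) := by
        intro d hd
        obtain ⟨hle, hone, hsum⟩ := Dset_mem hd
        rw [Dset, Finset.mem_filter, Fintype.mem_piFinset]
        refine ⟨fun j => ?_, fun j => ?_, ?_⟩
        · rw [Finset.mem_range]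
          by_cases hj : j = 0
          · subst hj; rw [hφ]; simp only [Function.update_self]
            have := hle 0; omega
          · rw [hφ]; simp only; rw [Function.update_of_ne hj]
            have := hle j; omega
        · by_cases hj : j = 0
          · subst hj; rw [hφ]; simp only [Function.update_self]; omega
          · rw [hφ]; simp only; rw [Function.update_of_ne hj]; exact hone j
        · have e1 : ∑ j : Fin (m+1), ((j : ℕ) + 1) * (φ d) j
              = (φ d) 0 + ∑ j ∈ (Finset.univ : Finset (Fin (m+1))).erase 0, ((j : ℕ) + 1) * (φ d) j := by
            rw [← Finset.add_sum_erase _ _ (Finset.mem_univ (0 : Fin (m+1)))]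
            simp
          have e2 : ∑ j : Fin (m+1), ((j : ℕ) + 1) * d j
              = d 0 + ∑ j ∈ (Finset.univ : Finset (Fin (m+1))).erase 0, ((j : ℕ) + 1) * d j := by
            rw [← Finset.add_sum_erase _ _ (Finset.mem_univ (0 : Fin (m+1)))]
            simp
          have e3 : ∑ j ∈ (Finset.univ : Finset (Fin (m+1))).erase 0, ((j : ℕ) + 1) * (φ d) j
              = ∑ j ∈ (Finset.univ : Finset (Fin (m+1))).erase 0, ((j : ℕ) + 1) * d j := by
            refine Finset.sum_congr rfl fun j hj => ?_
            rw [hφ]; simp only; rw [Function.update_of_ne (Finset.mem_erase.mp hj).1]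
          have h2 : (φ d) 0 = d 0 + 1 := by rw [hφ]; simp
          rw [e1, e3, h2]
          rw [e2] at hsum
          omega
      have hφinj : ∀ d ∈ Dset (m+1) n, ∀ d' ∈ Dset (m+1) n, φ d = φ d' → d = d' := by
        intro d _ d' _ h
        funext j
        by_cases hj : j = 0
        · subst hj
          have := congrFun h 0
          rw [hφ] at this; simp only [Function.update_self] at this
          omega
        · have := congrFun h j
          rw [hφ] at this; simp only at this
          rwa [Function.update_of_ne hj, Function.update_of_ne hj] at this
      calc ∑ d ∈ Dset (m+1) n, 2 * W d
          = ∑ d ∈ Dset (m+1) n, W (φ d) := by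
            exact Finset.sum_congr rfl fun d _ => (hWφ d).symm
        _ = ∑ e ∈ (Dset (m+1) n).image φ, W e := (Finset.sum_image hφinj).symm
        _ ≤ ∑ e ∈ Dset (m+1) (n+1), W e := by
            apply Finset.sum_le_sum_of_subset_of_nonneg
            · intro e he
              obtain ⟨d, hd, rfl⟩ := Finset.mem_image.mp he
              exact hφmem d hd
            · intro e _ _
              apply Finset.prod_nonneg
              intro j _
              positivity

lemma pw_div_mono (t : ℕ) : Monotone (fun n => primeWeight t n / 2 ^ n) := by
  apply monotone_nat_of_le_succ
  intro n
  rw [div_le_div_iff₀ (by positivity) (by positivity)]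
  calc primeWeight t n * 2 ^ (n+1) = (2 * primeWeight t n) * 2 ^ n := by ring
    _ ≤ primeWeight t (n+1) * 2 ^ n := by
        apply mul_le_mul_of_nonneg_right (pw_mono_step t n) (by positivity)

set_option maxHeartbeats 1000000 in
lemma Vsum_ge_box (m M n : ℕ) (hM : 1 ≤ M)
    (hn : 1 + (∑ j ∈ (Finset.univ : Finset (Fin (m+1))).erase 0, ((j : ℕ) + 1) * M) ≤ n) :
    ∏ j ∈ (Finset.univ : Finset (Fin (m+1))).erase 0, (∑ k ∈ Finset.Icc 1 M, cg (j : ℕ) ^ k)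
      ≤ ∑ d ∈ Dset (m+1) n, ∏ j : Fin (m+1), cg (j : ℕ) ^ d j := by
  classical
  set sM : Fin (m+1) → Finset ℕ := fun j => if j = 0 then {1} else Finset.Icc 1 M with hsM
  set T : (Fin (m+1) → ℕ) → ℕ :=
    fun e => ∑ j ∈ (Finset.univ : Finset (Fin (m+1))).erase 0, ((j : ℕ) + 1) * e j with hT
  set ψ : (Fin (m+1) → ℕ) → (Fin (m+1) → ℕ) := fun e => Function.update e 0 (n - T e) with hψ
  have hmemE : ∀ e ∈ Fintype.piFinset sM, (e 0 = 1 ∧ ∀ j : Fin (m+1), j ≠ 0 → 1 ≤ e j ∧ e j ≤ M) := by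
    intro e he
    rw [Fintype.mem_piFinset] at he
    constructor
    · have := he 0; simp only [hsM, if_pos rfl, Finset.mem_singleton] at this; exact this
    · intro j hj
      have := he j; simp only [hsM, if_neg hj, Finset.mem_Icc] at this; exact this
  have hTle : ∀ e ∈ Fintype.piFinset sM, T e + 1 ≤ n := by
    intro e he
    have h1 : T e ≤ ∑ j ∈ (Finset.univ : Finset (Fin (m+1))).erase 0, ((j : ℕ) + 1) * M := by
      apply Finset.sum_le_sum
      intro j hj
      exact Nat.mul_le_mul_left _ ((hmemE e he).2 j (Finset.mem_erase.mp hj).1).2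
    omega
  have hψV : ∀ e : Fin (m+1) → ℕ,
      ∏ j : Fin (m+1), cg (j : ℕ) ^ (ψ e) j = ∏ j : Fin (m+1), cg (j : ℕ) ^ e j := by
    intro e
    refine Finset.prod_congr rfl fun j _ => ?_
    by_cases hj : j = 0
    · subst hj; simp [cg_zero]
    · rw [hψ]; simp only; rw [Function.update_of_ne hj]
  have hψmem : ∀ e ∈ Fintype.piFinset sM, ψ e ∈ Dset (m+1) n := by
    intro e he
    obtain ⟨he0, hetail⟩ := hmemE e he
    have hTe := hTle e he
    rw [Dset, Finset.mem_filter, Fintype.mem_piFinset]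
    refine ⟨fun j => ?_, fun j => ?_, ?_⟩
    · rw [Finset.mem_range]
      by_cases hj : j = 0
      · subst hj; rw [hψ]; simp only [Function.update_self]; omega
      · rw [hψ]; simp only; rw [Function.update_of_ne hj]
        have h1 : ((j : ℕ) + 1) * e j ≤ T e := by
          apply Finset.single_le_sum (f := fun j : Fin (m+1) => ((j : ℕ) + 1) * e j)
          · intro i _; exact Nat.zero_le _
          · exact Finset.mem_erase.mpr ⟨hj, Finset.mem_univ j⟩
        have h2 : e j ≤ ((j : ℕ) + 1) * e j := Nat.le_mul_of_pos_left _ (by omega)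
        omega
    · by_cases hj : j = 0
      · subst hj; rw [hψ]; simp only [Function.update_self]; omega
      · rw [hψ]; simp only; rw [Function.update_of_ne hj]; exact (hetail j hj).1
    · have e1 : ∑ j : Fin (m+1), ((j : ℕ) + 1) * (ψ e) j
          = (ψ e) 0 + ∑ j ∈ (Finset.univ : Finset (Fin (m+1))).erase 0, ((j : ℕ) + 1) * (ψ e) j := by
        rw [← Finset.add_sum_erase _ _ (Finset.mem_univ (0 : Fin (m+1)))]
        simp
      have e3 : ∑ j ∈ (Finset.univ : Finset (Fin (m+1))).erase 0, ((j : ℕ) + 1) * (ψ e) j = T e := by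
        refine Finset.sum_congr rfl fun j hj => ?_
        rw [hψ]; simp only; rw [Function.update_of_ne (Finset.mem_erase.mp hj).1]
      have h2 : (ψ e) 0 = n - T e := by rw [hψ]; simp
      rw [e1, e3, h2]
      omega
  have hψinj : ∀ e ∈ Fintype.piFinset sM, ∀ e' ∈ Fintype.piFinset sM, ψ e = ψ e' → e = e' := by
    intro e he e' he' h
    funext j
    by_cases hj : j = 0
    · subst hj; rw [(hmemE e he).1, (hmemE e' he').1]
    · have := congrFun h j
      rw [hψ] at this; simp only at this
      rwa [Function.update_of_ne hj, Function.update_of_ne hj] at this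
  calc ∏ j ∈ (Finset.univ : Finset (Fin (m+1))).erase 0, (∑ k ∈ Finset.Icc 1 M, cg (j : ℕ) ^ k)
      = ∏ j : Fin (m+1), ∑ k ∈ sM j, cg (j : ℕ) ^ k := by
        rw [← Finset.mul_prod_erase Finset.univ
          (fun j : Fin (m+1) => ∑ k ∈ sM j, cg (j : ℕ) ^ k) (Finset.mem_univ 0)]
        have h0 : (∑ k ∈ sM 0, cg ((0 : Fin (m+1)) : ℕ) ^ k) = 1 := by
          simp [hsM, cg_zero]
        rw [h0, one_mul]
        refine Finset.prod_congr rfl fun j hj => ?_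
        rw [hsM]; simp only [if_neg (Finset.mem_erase.mp hj).1]
    _ = ∑ e ∈ Fintype.piFinset sM, ∏ j : Fin (m+1), cg (j : ℕ) ^ e j := Finset.prod_univ_sum sM _
    _ = ∑ e ∈ Fintype.piFinset sM, ∏ j : Fin (m+1), cg (j : ℕ) ^ (ψ e) j := by
        exact Finset.sum_congr rfl fun e _ => (hψV e).symm
    _ = ∑ d ∈ (Fintype.piFinset sM).image ψ, ∏ j : Fin (m+1), cg (j : ℕ) ^ d j := by
        rw [Finset.sum_image hψinj]
    _ ≤ ∑ d ∈ Dset (m+1) n, ∏ j : Fin (m+1), cg (j : ℕ) ^ d j := by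
        apply Finset.sum_le_sum_of_subset_of_nonneg
        · intro d hd
          obtain ⟨e, he, rfl⟩ := Finset.mem_image.mp hd
          exact hψmem e he
        · intro d _ _
          apply Finset.prod_nonneg
          intro j _
          exact pow_nonneg (le_of_lt (cg_pos _)) _

lemma pw_lower (m : ℕ) (ε : ℝ) (hε : 0 < ε) :
    ∃ N : ℕ, qseq (m+1) - ε < primeWeight (m+1) N / 2 ^ N := by
  have hA : Filter.Tendsto (fun M : ℕ => (1 / (((m:ℝ)+1) * ((m:ℝ)+2))) *
      ∏ j ∈ (Finset.univ : Finset (Fin (m+1))).erase 0, ∑ k ∈ Finset.Icc 1 M, cg (j : ℕ) ^ k)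
      Filter.atTop (nhds (qseq (m+1))) := by
    have hq : qseq (m+1) = (1 / (((m:ℝ)+1) * ((m:ℝ)+2))) *
        ∏ j ∈ (Finset.univ : Finset (Fin (m+1))).erase 0, (cg (j : ℕ) / (1 - cg (j : ℕ))) := by
      rw [qseq_closed, ← prod_erase_eq_Ico m (fun j => cg j / (1 - cg j))]
    rw [hq]
    apply Filter.Tendsto.const_mul
    apply tendsto_finset_prod
    intro j hj
    have hjv : 1 ≤ (j : ℕ) := by
      have : (j : ℕ) ≠ 0 := fun h => (Finset.mem_erase.mp hj).1 (Fin.ext (by simp [h]))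
      omega
    exact geom_Icc_tendsto _ (le_of_lt (cg_pos _)) (cg_lt_one _ hjv)
  have hev : ∀ᶠ M : ℕ in Filter.atTop, qseq (m+1) - ε < (1 / (((m:ℝ)+1) * ((m:ℝ)+2))) *
      ∏ j ∈ (Finset.univ : Finset (Fin (m+1))).erase 0, ∑ k ∈ Finset.Icc 1 M, cg (j : ℕ) ^ k :=
    hA.eventually (eventually_gt_nhds (by linarith))
  obtain ⟨M, hM1, hMgt⟩ := ((Filter.eventually_ge_atTop 1).and hev).exists
  set N : ℕ := 1 + ∑ j ∈ (Finset.univ : Finset (Fin (m+1))).erase 0, ((j : ℕ) + 1) * M with hN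
  refine ⟨N, ?_⟩
  have hbox := Vsum_ge_box m M N hM1 (le_of_eq hN.symm)
  have hpw : primeWeight (m+1) N / 2 ^ N = (1 / (((m+1 : ℕ) : ℝ) * (((m+1 : ℕ) : ℝ) + 1))) *
      ∑ d ∈ Dset (m+1) N, ∏ j : Fin (m+1), cg (j : ℕ) ^ d j := by
    rw [pw_Vsum, mul_comm ((2:ℝ)^N), mul_div_assoc,
      div_self (by positivity : ((2:ℝ)^N) ≠ 0), mul_one]
  have hcoef : (1 / (((m+1 : ℕ) : ℝ) * (((m+1 : ℕ) : ℝ) + 1)))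
      = 1 / (((m:ℝ)+1) * ((m:ℝ)+2)) := by push_cast; ring_nf
  calc qseq (m+1) - ε
      < (1 / (((m:ℝ)+1) * ((m:ℝ)+2))) *
          ∏ j ∈ (Finset.univ : Finset (Fin (m+1))).erase 0, ∑ k ∈ Finset.Icc 1 M, cg (j : ℕ) ^ k :=
        hMgt
    _ ≤ (1 / (((m:ℝ)+1) * ((m:ℝ)+2))) *
          ∑ d ∈ Dset (m+1) N, ∏ j : Fin (m+1), cg (j : ℕ) ^ d j :=
        mul_le_mul_of_nonneg_left hbox (by positivity)
    _ = primeWeight (m+1) N / 2 ^ N := by rw [hpw, hcoef]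

lemma pw_summable (n : ℕ) : Summable (fun t => primeWeight t n) := by
  apply summable_of_ne_finset_zero (s := Finset.range (n+1))
  intro t ht
  rw [Finset.mem_range] at ht
  exact primeWeight_eq_zero_of_gt (by omega)

lemma pw_div_summable (n : ℕ) : Summable (fun t => primeWeight t n / 2 ^ n) :=
  (pw_summable n).div_const _

lemma f_eq (n : ℕ) : (∑' t : ℕ, primeWeight t n) / 2 ^ n = ∑' t : ℕ, primeWeight t n / 2 ^ n :=
  tsum_div_const.symm

lemma f_le_gamma (n : ℕ) : ∑' t : ℕ, primeWeight t n / 2 ^ n ≤ ∑' t : ℕ, qseq t := by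
  apply Summable.tsum_le_tsum _ (pw_div_summable n) qseq_summable
  intro t
  rw [div_le_iff₀ (by positivity : (0:ℝ) < 2 ^ n)]
  exact primeWeight_le t n

lemma f_mono : Monotone (fun n => ∑' t : ℕ, primeWeight t n / 2 ^ n) := by
  apply monotone_nat_of_le_succ
  intro n
  exact Summable.tsum_le_tsum (fun t => pw_div_mono t (Nat.le_succ n))
    (pw_div_summable n) (pw_div_summable (n+1))

lemma claimC (ε : ℝ) (hε : 0 < ε) :
    ∃ N : ℕ, (∑' t : ℕ, qseq t) - ε < ∑' t : ℕ, primeWeight t N / 2 ^ N := by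
  set γ : ℝ := ∑' t : ℕ, qseq t with hγ
  have hps := qseq_summable.hasSum.tendsto_sum_nat
  have hev : ∀ᶠ T : ℕ in Filter.atTop, γ - ε/2 < ∑ t ∈ Finset.range T, qseq t :=
    hps.eventually (eventually_gt_nhds (by linarith))
  obtain ⟨T, hT1, hT⟩ := ((Filter.eventually_ge_atTop 1).and hev).exists
  set ε' : ℝ := ε / (2 * T) with hε'
  have hε'pos : 0 < ε' := by
    rw [hε']
    apply div_pos hε
    have : (0:ℝ) < (T:ℝ) := by exact_mod_cast hT1
    linarith
  have hex : ∀ t : ℕ, ∃ N : ℕ, qseq t - ε' < primeWeight t N / 2 ^ N := by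
    intro t
    cases t with
    | zero =>
        refine ⟨0, ?_⟩
        rw [qseq_zero]
        have h1 : (0:ℝ) ≤ primeWeight 0 0 / 2 ^ 0 := by
          apply div_nonneg (primeWeight_nonneg 0 0) (by norm_num)
        linarith
    | succ m => exact pw_lower m ε' hε'pos
  choose Nf hNf using hex
  set N : ℕ := (Finset.range T).sup Nf with hNdef
  refine ⟨N, ?_⟩
  have hstep : ∀ t ∈ Finset.range T, qseq t - ε' < primeWeight t N / 2 ^ N := by
    intro t ht
    calc qseq t - ε' < primeWeight t (Nf t) / 2 ^ (Nf t) := hNf t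
      _ ≤ primeWeight t N / 2 ^ N := pw_div_mono t (Finset.le_sup ht)
  have hsum : ∑ t ∈ Finset.range T, (qseq t - ε') < ∑ t ∈ Finset.range T, primeWeight t N / 2 ^ N := by
    apply Finset.sum_lt_sum_of_nonempty
    · exact Finset.nonempty_range_iff.mpr (by omega)
    · exact hstep
  have hTε : ∑ t ∈ Finset.range T, (qseq t - ε') = (∑ t ∈ Finset.range T, qseq t) - ε/2 := by
    rw [Finset.sum_sub_distrib, Finset.sum_const, Finset.card_range, hε']
    congr 1
    have hT0 : (T:ℝ) ≠ 0 := by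
      have : (0:ℝ) < (T:ℝ) := by exact_mod_cast hT1
      linarith
    field_simp
    ring_nf
    simp [hT0]
  have hle : ∑ t ∈ Finset.range T, primeWeight t N / 2 ^ N ≤ ∑' t : ℕ, primeWeight t N / 2 ^ N := by
    apply Summable.sum_le_tsum _ _ (pw_div_summable N)
    intro t _
    apply div_nonneg (primeWeight_nonneg t N) (by positivity)
  calc γ - ε = (γ - ε/2) - ε/2 := by ring
    _ < (∑ t ∈ Finset.range T, qseq t) - ε/2 := by linarith
    _ = ∑ t ∈ Finset.range T, (qseq t - ε') := hTε.symm
    _ < ∑ t ∈ Finset.range T, primeWeight t N / 2 ^ N := hsum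
    _ ≤ ∑' t : ℕ, primeWeight t N / 2 ^ N := hle

theorem stmt_11 :
    (∀ ε : ℝ, 0 < ε → ∃ N : ℕ, ∀ n : ℕ, N ≤ n →
      (∑' t : ℕ, primeWeight t n) > ((∑' t : ℕ, qseq t) - ε) * 2 ^ n) ∧
    Filter.Tendsto (fun n : ℕ => (∑' t : ℕ, primeWeight t n) / 2 ^ n)
      Filter.atTop (nhds (∑' t : ℕ, qseq t)) := by
  constructor
  · intro ε hε
    obtain ⟨N, hN⟩ := claimC ε hε
    refine ⟨N, fun n hn => ?_⟩
    have h1 : (∑' t : ℕ, qseq t) - ε < ∑' t : ℕ, primeWeight t n / 2 ^ n :=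
      lt_of_lt_of_le hN (f_mono hn)
    rw [← f_eq n] at h1
    calc ((∑' t : ℕ, qseq t) - ε) * 2 ^ n
        < ((∑' t : ℕ, primeWeight t n) / 2 ^ n) * 2 ^ n := by
          apply mul_lt_mul_of_pos_right h1 (by positivity)
      _ = ∑' t : ℕ, primeWeight t n := by
          field_simp
  · rw [Metric.tendsto_atTop]
    intro ε hε
    obtain ⟨N, hN⟩ := claimC (ε/2) (by linarith)
    refine ⟨N, fun n hn => ?_⟩
    have h1 : (∑' t : ℕ, qseq t) - ε/2 < ∑' t : ℕ, primeWeight t n / 2 ^ n :=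
      lt_of_lt_of_le hN (f_mono hn)
    have h2 : ∑' t : ℕ, primeWeight t n / 2 ^ n ≤ ∑' t : ℕ, qseq t := f_le_gamma n
    rw [Real.dist_eq, f_eq n, abs_sub_lt_iff]
    constructor <;> linarith
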